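/- There exists a family of chordal s-t graphs G_n on n vertices for which the minimum feedback vertex set has size 1 while every tracking set has size n − 2; hence the ratio between minimum tracking set and minimum feedback vertex set is unbounded even on chordal graphs. -/

import Mathlib

open SimpleGraph

noncomputable def trackSeq {V : Type} (T : Set V) (l : List V) : List V :=
  l.filter (fun v => @decide (v ∈ T) (Classical.propDecidable _))

/-- `T` is a tracking set for `s`-`t` paths in `G`: distinct `s`-`t` paths have
distinct sequences of `T`-vertices along them. -/
def IsTrackingSet {V : Type} (G : SimpleGraph V) (s t : V) (T : Set V) : Prop :=
  ∀ p q : G.Walk s t, p.IsPath → q.IsPath →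
    trackSeq T p.support = trackSeq T q.support → p = q

/-- Every vertex and every edge of `G` lies on some `s`-`t` path. -/
def Reduced {V : Type} (G : SimpleGraph V) (s t : V) : Prop :=
  (∀ v : V, ∃ p : G.Walk s t, p.IsPath ∧ v ∈ p.support) ∧
  (∀ e ∈ G.edgeSet, ∃ p : G.Walk s t, p.IsPath ∧ e ∈ p.edges)

/-- `S` is a feedback vertex set: every cycle of `G` meets `S`. -/
def IsFVS {V : Type} (G : SimpleGraph V) (S : Set V) : Prop :=
  ∀ (v : V) (c : G.Walk v v), c.IsCycle → ∃ x ∈ c.support, x ∈ S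

/-- The neighbourhood of a set of vertices. -/
def nbhd {V : Type} (G : SimpleGraph V) (S : Set V) : Set V :=
  {v | ∃ u ∈ S, G.Adj u v}

/-- Every cycle of length at least 4 has a chord. -/
def IsChordal {V : Type} (G : SimpleGraph V) : Prop :=
  ∀ (u : V) (c : G.Walk u u), c.IsCycle → 4 ≤ c.length →
    ∃ x ∈ c.support, ∃ y ∈ c.support, G.Adj x y ∧ s(x, y) ∉ c.edges

open scoped Classical in
lemma trackSeq_cons {V : Type} (T : Set V) (a : V) (l : List V) :
    trackSeq T (a :: l) = if a ∈ T then a :: trackSeq T l else trackSeq T l := by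
  by_cases h : a ∈ T <;> simp [trackSeq, List.filter_cons, h]

lemma trackSeq_append {V : Type} (T : Set V) (l₁ l₂ : List V) :
    trackSeq T (l₁ ++ l₂) = trackSeq T l₁ ++ trackSeq T l₂ :=
  List.filter_append _ _

open scoped Classical in
lemma trackSeq_eq_self {V : Type} {T : Set V} {l : List V} (h : ∀ a ∈ l, a ∈ T) :
    trackSeq T l = l :=
  List.filter_eq_self.mpr fun a ha => decide_eq_true (h a ha)

lemma walk_eq_of_support_eq {V : Type} {G : SimpleGraph V} {a b : V}
    (p : G.Walk a b) : ∀ q : G.Walk a b, p.support = q.support → p = q := by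
  induction p with
  | nil =>
    intro q h
    cases q with
    | nil => rfl
    | cons h' q' =>
      simp only [Walk.support_nil, Walk.support_cons, List.cons.injEq] at h
      exact absurd h.2.symm q'.support_ne_nil
  | @cons u c b h' p' ih =>
    intro q hq
    cases q with
    | nil =>
      simp only [Walk.support_nil, Walk.support_cons, List.cons.injEq] at hq
      exact absurd hq.2 p'.support_ne_nil
    | @cons _ d _ h'' q'' =>
      simp only [Walk.support_cons, List.cons.injEq] at hq
      have hcd : c = d := by
        have h1 := p'.support_eq_cons
        have h2 := q''.support_eq_cons
        rw [h1, h2] at hq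
        exact (List.cons.inj hq.2).1
      subst hcd
      rw [ih q'' (by
        rw [p'.support_eq_cons, q''.support_eq_cons] at hq ⊢
        exact hq.2)]

lemma path_support_decomp {V : Type} {G : SimpleGraph V} {s t : V} (hst : s ≠ t)
    {p : G.Walk s t} (hp : p.IsPath) :
    p.support = s :: (p.support.tail.dropLast ++ [t]) ∧
    s ∉ p.support.tail.dropLast ∧ t ∉ p.support.tail.dropLast := by
  have hcons := p.support_eq_cons
  have hne : p.support.tail ≠ [] := by
    intro h
    have := p.end_mem_support
    rw [hcons, h] at this
    simp at this
    exact hst this.symm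
  have h0 : p.support.getLast? = some t := by
    rw [List.getLast?_eq_getLast_of_ne_nil p.support_ne_nil]
    exact congrArg some p.getLast_support
  have h1 : p.support.tail.getLast? = some t := by
    rw [hcons] at h0
    rcases e : p.support.tail with _ | ⟨a, l⟩
    · exact absurd e hne
    · rw [e] at h0
      rwa [List.getLast?_cons_cons] at h0
  have hlast : p.support.tail.getLast hne = t := by
    rw [List.getLast?_eq_getLast_of_ne_nil hne] at h1
    exact Option.some.inj h1
  have hdec : p.support.tail = p.support.tail.dropLast ++ [t] := by
    conv_lhs => rw [← List.dropLast_append_getLast hne]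
    rw [hlast]
  have hnodup := hp.support_nodup
  rw [hcons, List.nodup_cons] at hnodup
  refine ⟨by rw [← hdec]; exact hcons, fun hs => hnodup.1 (by
      rw [hdec]; exact List.mem_append_left _ hs), fun ht => ?_⟩
  have h2 := hnodup.2
  rw [hdec] at h2
  exact (List.disjoint_of_nodup_append h2) ht (List.mem_singleton_self t)

open scoped Classical in
lemma tracking_compl {V : Type} {G : SimpleGraph V} {s t : V} (hst : s ≠ t) :
    ∀ p q : G.Walk s t, p.IsPath → q.IsPath →
      trackSeq {v | v ≠ s ∧ v ≠ t} p.support = trackSeq {v | v ≠ s ∧ v ≠ t} q.support → p = q := by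
  intro p q hp hq h
  set T : Set V := {v | v ≠ s ∧ v ≠ t} with hT
  have key : ∀ (r : G.Walk s t), r.IsPath → trackSeq T r.support = r.support.tail.dropLast := by
    intro r hr
    obtain ⟨h1, h2, h3⟩ := path_support_decomp hst hr
    have hm : trackSeq T r.support.tail.dropLast = r.support.tail.dropLast := by
      apply trackSeq_eq_self
      intro a ha
      constructor
      · intro h'; subst h'; exact h2 ha
      · intro h'; subst h'; exact h3 ha
    rw [h1, trackSeq_cons, if_neg (by simp [hT]), trackSeq_append, hm,
      trackSeq_cons, if_neg (by simp [hT]), trackSeq]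
    simp
  rw [key p hp, key q hq] at h
  apply walk_eq_of_support_eq
  rw [(path_support_decomp hst hp).1, (path_support_decomp hst hq).1, h]

lemma path_start_edge {V : Type} {G : SimpleGraph V} {a z y : V} {p : G.Walk a z}
    (hp : p.IsPath) (h : s(a, y) ∈ p.edges) : y = p.getVert 1 := by
  cases p with
  | nil => simp at h
  | @cons _ b _ hadj q =>
    rw [SimpleGraph.Walk.cons_isPath_iff] at hp
    rw [Walk.edges_cons, List.mem_cons] at h
    rcases h with h | h
    · rw [Sym2.eq_iff] at h
      rcases h with ⟨-, rfl⟩ | ⟨rfl, rfl⟩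
      · rw [Walk.getVert_cons_succ, Walk.getVert_zero]
      · exact absurd rfl hadj.ne
    · exact absurd (q.fst_mem_support_of_mem_edges h) hp.2

lemma cycle_neighbors {V : Type} [DecidableEq V] {G : SimpleGraph V} {v w : V}
    {c : G.Walk v v} (hc : c.IsCycle) (hw : w ∈ c.support) :
    ∃ a b : V, a ≠ b ∧ s(w, a) ∈ c.edges ∧ s(w, b) ∈ c.edges ∧
      ∀ y : V, s(w, y) ∈ c.edges → y = a ∨ y = b := by
  have hc' : (c.rotate w hw).IsCycle := hc.rotate hw
  have hmem : ∀ e : Sym2 V, e ∈ (c.rotate w hw).edges ↔ e ∈ c.edges :=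
    fun e => (c.rotate_edges w hw).mem_iff
  suffices h : ∃ a b : V, a ≠ b ∧ s(w, a) ∈ (c.rotate w hw).edges ∧
      s(w, b) ∈ (c.rotate w hw).edges ∧
      ∀ y : V, s(w, y) ∈ (c.rotate w hw).edges → y = a ∨ y = b by
    obtain ⟨a, b, hab, ha, hb, hu⟩ := h
    exact ⟨a, b, hab, (hmem _).mp ha, (hmem _).mp hb,
      fun y hy => hu y ((hmem _).mpr hy)⟩
  generalize (c.rotate w hw) = c' at hc' ⊢
  clear hmem hw hc
  obtain ⟨a, hadj, p, rfl⟩ := SimpleGraph.Walk.not_nil_iff.mp hc'.not_nil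
  have hlen : 3 ≤ (Walk.cons hadj p).length := hc'.three_le_length
  rw [Walk.length_cons] at hlen
  rw [SimpleGraph.Walk.cons_isCycle_iff] at hc'
  have hrev : p.reverse.IsPath := hc'.1.reverse
  have hnil : ¬ p.reverse.Nil := by
    rw [Walk.not_nil_iff_lt_length, Walk.length_reverse]
    omega
  obtain ⟨b, hb, q, hq⟩ := SimpleGraph.Walk.not_nil_iff.mp hnil
  have hb1 : p.reverse.getVert 1 = b := by
    rw [hq, Walk.getVert_cons_succ, Walk.getVert_zero]
  have hbe : s(w, b) ∈ p.edges := by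
    have h2 : s(w, b) ∈ p.reverse.edges := by rw [hq]; simp
    rwa [Walk.edges_reverse, List.mem_reverse] at h2
  refine ⟨a, b, ?_, by simp, List.mem_cons_of_mem _ hbe, ?_⟩
  · rintro rfl
    exact hc'.2 hbe
  · intro y hy
    rw [Walk.edges_cons, List.mem_cons] at hy
    rcases hy with hy | hy
    · rw [Sym2.eq_iff] at hy
      rcases hy with ⟨-, rfl⟩ | ⟨rfl, rfl⟩
      · exact Or.inl rfl
      · exact absurd rfl hadj.ne
    · right
      have h2 : s(w, y) ∈ p.reverse.edges := by
        rw [Walk.edges_reverse, List.mem_reverse]; exact hy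
      rw [path_start_edge hrev h2, hb1]

def fanG (n : ℕ) : SimpleGraph (Fin n) where
  Adj a b := a ≠ b ∧ (a.val = 0 ∨ a.val = 2 ∨ b.val = 0 ∨ b.val = 2)
  symm := by
    constructor
    rintro a b ⟨h1, h2⟩
    exact ⟨h1.symm, by tauto⟩
  loopless := by
    constructor
    rintro a ⟨h1, -⟩
    exact h1 rfl

lemma fanG_adj_of {n : ℕ} {a b : Fin n} (hne : a.val ≠ b.val)
    (h : a.val = 0 ∨ a.val = 2 ∨ b.val = 0 ∨ b.val = 2) : (fanG n).Adj a b :=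
  ⟨fun e => hne (congrArg Fin.val e), h⟩

lemma fanG_high_adj {n : ℕ} {a b : Fin n} (h0 : a.val ≠ 0) (h2 : a.val ≠ 2)
    (h : (fanG n).Adj a b) : b.val = 0 ∨ b.val = 2 := by
  rcases h with ⟨-, h⟩
  tauto

lemma one_high {n : ℕ} {l : List (Fin n)} (hnd : l.Nodup) (hl : 3 ≤ l.length)
    (h0 : ∀ z ∈ l, z.val ≠ 0) : ∃ u ∈ l, u.val ≠ 0 ∧ u.val ≠ 2 := by
  rcases l with _ | ⟨a, _ | ⟨b, rest⟩⟩
  · simp at hl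
  · simp at hl
  · by_cases ha : a.val = 2
    · refine ⟨b, by simp, h0 b (by simp), fun hb => ?_⟩
      have hab : a ≠ b := by
        rw [List.nodup_cons] at hnd
        exact fun e => hnd.1 (e ▸ (List.mem_cons_self : b ∈ b :: rest))
      exact hab (Fin.ext (ha.trans hb.symm))
    · exact ⟨a, by simp, h0 a (by simp), ha⟩

lemma two_high {n : ℕ} (hn : 4 ≤ n) {l : List (Fin n)} (hnd : l.Nodup) (hl : 4 ≤ l.length) :
    ∃ u₁ ∈ l, ∃ u₂ ∈ l, u₁ ≠ u₂ ∧ (u₁.val ≠ 0 ∧ u₁.val ≠ 2) ∧ (u₂.val ≠ 0 ∧ u₂.val ≠ 2) := by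
  classical
  have hcard : l.toFinset.card = l.length := List.toFinset_card_of_nodup hnd
  have hsub : l.toFinset.filter (fun z => z.val = 0 ∨ z.val = 2) ⊆
      {(⟨0, by omega⟩ : Fin n), ⟨2, by omega⟩} := by
    intro z hz
    rw [Finset.mem_filter] at hz
    rcases hz.2 with h | h
    · rw [show z = (⟨0, by omega⟩ : Fin n) from Fin.ext h]
      exact Finset.mem_insert_self _ _
    · rw [show z = (⟨2, by omega⟩ : Fin n) from Fin.ext h]
      exact Finset.mem_insert_of_mem (Finset.mem_singleton_self _)
  have h2 : (l.toFinset.filter (fun z => z.val = 0 ∨ z.val = 2)).card ≤ 2 :=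
    le_trans (Finset.card_le_card hsub)
      (le_trans (Finset.card_insert_le _ _) (by simp))
  have hsplit := Finset.card_filter_add_card_filter_not
    (s := l.toFinset) (p := fun z => z.val = 0 ∨ z.val = 2)
  have hF : 1 < (l.toFinset.filter (fun z => ¬(z.val = 0 ∨ z.val = 2))).card := by omega
  obtain ⟨u₁, hu₁, u₂, hu₂, hne⟩ := Finset.one_lt_card.mp hF
  rw [Finset.mem_filter, List.mem_toFinset] at hu₁ hu₂
  push_neg at hu₁ hu₂
  exact ⟨u₁, hu₁.1, u₂, hu₂.1, hne, hu₁.2, hu₂.2⟩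

lemma support_tail_facts {n : ℕ} {v : Fin n} {c : (fanG n).Walk v v} (hc : c.IsCycle) :
    c.support.tail.Nodup ∧ c.support.tail.length = c.length ∧
    ∀ z ∈ c.support.tail, z ∈ c.support := by
  refine ⟨hc.support_nodup, ?_, fun z hz => List.mem_of_mem_tail hz⟩
  rw [List.length_tail, Walk.length_support]
  omega

lemma cycle_neighbor_vals {n : ℕ} {v u : Fin n} {c : (fanG n).Walk v v} (hc : c.IsCycle)
    (hu : u ∈ c.support) (h0 : u.val ≠ 0) (h2 : u.val ≠ 2) :
    ∃ a b : Fin n, a ≠ b ∧ (a.val = 0 ∨ a.val = 2) ∧ (b.val = 0 ∨ b.val = 2) ∧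
      s(u, a) ∈ c.edges ∧ s(u, b) ∈ c.edges ∧ a ∈ c.support ∧ b ∈ c.support := by
  obtain ⟨a, b, hab, ha, hb, -⟩ := cycle_neighbors hc hu
  exact ⟨a, b, hab,
    fanG_high_adj h0 h2 (c.adj_of_mem_edges ha),
    fanG_high_adj h0 h2 (c.adj_of_mem_edges hb),
    ha, hb, c.snd_mem_support_of_mem_edges ha, c.snd_mem_support_of_mem_edges hb⟩

lemma fan_fvs {n : ℕ} (hn : 4 ≤ n) : IsFVS (fanG n) {(⟨0, by omega⟩ : Fin n)} := by
  intro v c hc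
  by_contra hcon
  push_neg at hcon
  obtain ⟨hnd, hlen, hmem⟩ := support_tail_facts hc
  have h3 : 3 ≤ c.support.tail.length := hlen ▸ hc.three_le_length
  have h0 : ∀ z ∈ c.support.tail, z.val ≠ 0 := by
    intro z hz hz0
    exact hcon z (hmem z hz) (by rw [Set.mem_singleton_iff]; exact Fin.ext hz0)
  obtain ⟨u, hu, hu0, hu2⟩ := one_high hnd h3 h0
  obtain ⟨a, b, hab, ha, hb, -, -, has, hbs⟩ :=
    cycle_neighbor_vals hc (hmem u hu) hu0 hu2
  have hane : a.val ≠ 0 := fun h =>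
    hcon a has (by rw [Set.mem_singleton_iff]; exact Fin.ext h)
  have hbne : b.val ≠ 0 := fun h =>
    hcon b hbs (by rw [Set.mem_singleton_iff]; exact Fin.ext h)
  exact hab (Fin.ext (by omega : a.val = b.val))

lemma fan_chordal {n : ℕ} (hn : 4 ≤ n) : IsChordal (fanG n) := by
  intro v c hc hlen4
  set z0 : Fin n := ⟨0, by omega⟩ with hz0
  set z2 : Fin n := ⟨2, by omega⟩ with hz2
  obtain ⟨hnd, hlen, hmem⟩ := support_tail_facts hc
  obtain ⟨u₁, hu₁, u₂, hu₂, hne, ⟨h10, h12⟩, ⟨h20, h22⟩⟩ :=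
    two_high hn hnd (hlen ▸ hlen4)
  have key : ∀ u ∈ c.support, u.val ≠ 0 → u.val ≠ 2 →
      s(u, z0) ∈ c.edges ∧ s(u, z2) ∈ c.edges := by
    intro u hu h0 h2
    obtain ⟨a, b, hab, ha, hb, hea, heb, -, -⟩ := cycle_neighbor_vals hc hu h0 h2
    have haz : a = z0 ∨ a = z2 := by
      rcases ha with h | h
      · exact Or.inl (Fin.ext h)
      · exact Or.inr (Fin.ext h)
    have hbz : b = z0 ∨ b = z2 := by
      rcases hb with h | h
      · exact Or.inl (Fin.ext h)
      · exact Or.inr (Fin.ext h)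
    rcases haz with rfl | rfl <;> rcases hbz with rfl | rfl
    · exact absurd rfl hab
    · exact ⟨hea, heb⟩
    · exact ⟨heb, hea⟩
    · exact absurd rfl hab
  have k1 := key u₁ (hmem _ hu₁) h10 h12
  have k2 := key u₂ (hmem _ hu₂) h20 h22
  have hz0s : z0 ∈ c.support := c.snd_mem_support_of_mem_edges k1.1
  have hz2s : z2 ∈ c.support := c.snd_mem_support_of_mem_edges k1.2
  refine ⟨z0, hz0s, z2, hz2s, fanG_adj_of (by simp [hz0, hz2]) (by simp [hz0]), ?_⟩
  intro hchord
  obtain ⟨a, b, hab, -, -, huniq⟩ := cycle_neighbors hc hz0s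
  have e1 : u₁ = a ∨ u₁ = b := huniq u₁ (by rw [Sym2.eq_swap]; exact k1.1)
  have e2 : u₂ = a ∨ u₂ = b := huniq u₂ (by rw [Sym2.eq_swap]; exact k2.1)
  have e3 : z2 = a ∨ z2 = b := huniq z2 hchord
  have hz2u1 : u₁ ≠ z2 := fun h => h12 (by rw [h, hz2])
  have hz2u2 : u₂ ≠ z2 := fun h => h22 (by rw [h, hz2])
  rcases e1 with rfl | rfl <;> rcases e2 with h2' | h2' <;>
    rcases e3 with h3' | h3' <;> simp_all

section paths
variable {n : ℕ} {s t x : Fin n}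

lemma fan_reduced (hs : s.val = 0) (ht : t.val = 1) (hx : x.val = 2) :
    Reduced (fanG n) s t := by
  have ast : (fanG n).Adj s t := fanG_adj_of (by omega) (by omega)
  have asx : (fanG n).Adj s x := fanG_adj_of (by omega) (by omega)
  have axt : (fanG n).Adj x t := fanG_adj_of (by omega) (by omega)
  have hsv : ∀ v : Fin n, 3 ≤ v.val → (fanG n).Adj s v :=
    fun v hv => fanG_adj_of (by omega) (by omega)
  have hvx : ∀ v : Fin n, 3 ≤ v.val → (fanG n).Adj v x :=
    fun v hv => fanG_adj_of (by omega) (by omega)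
  have hp1 : (Walk.cons ast Walk.nil).IsPath := by
    rw [Walk.isPath_def]
    simp [Fin.ext_iff]
    omega
  have hp2 : (Walk.cons asx (Walk.cons axt Walk.nil)).IsPath := by
    rw [Walk.isPath_def]
    simp [Fin.ext_iff]
    omega
  have hp3 : ∀ (v : Fin n) (hv : 3 ≤ v.val),
      (Walk.cons (hsv v hv) (Walk.cons (hvx v hv) (Walk.cons axt Walk.nil))).IsPath := by
    intro v hv
    rw [Walk.isPath_def]
    simp [Fin.ext_iff]
    omega
  constructor
  · intro v
    by_cases h0 : v.val = 0
    · exact ⟨_, hp1, by simp [show v = s from Fin.ext (by omega)]⟩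
    · by_cases h1 : v.val = 1
      · exact ⟨_, hp1, by simp [show v = t from Fin.ext (by omega)]⟩
      · by_cases h2 : v.val = 2
        · exact ⟨_, hp2, by simp [show v = x from Fin.ext (by omega)]⟩
        · have hv : 3 ≤ v.val := by omega
          exact ⟨_, hp3 v hv, by simp⟩
  · intro e he
    induction e with
    | _ a b =>
      rw [SimpleGraph.mem_edgeSet] at he
      have key : ∀ a b : Fin n, (fanG n).Adj a b → a.val < b.val →
          ∃ p : (fanG n).Walk s t, p.IsPath ∧ s(a, b) ∈ p.edges := by
        intro a b hadj hlt
        have hne : a.val ≠ b.val := by omega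
        have hor := hadj.2
        by_cases ha0 : a.val = 0
        · have has : a = s := Fin.ext (by omega)
          subst has
          by_cases hb1 : b.val = 1
          · have : b = t := Fin.ext (by omega)
            subst this
            exact ⟨_, hp1, by simp⟩
          · by_cases hb2 : b.val = 2
            · have : b = x := Fin.ext (by omega)
              subst this
              exact ⟨_, hp2, by simp⟩
            · have hv : 3 ≤ b.val := by omega
              exact ⟨_, hp3 b hv, by simp⟩
        · by_cases ha1 : a.val = 1
          · -- a = t, b must be x
            have hb2 : b.val = 2 := by omega
            have : a = t := Fin.ext (by omega)
            subst this
            have : b = x := Fin.ext (by omega)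
            subst this
            refine ⟨_, hp2, ?_⟩
            simp [Sym2.eq_swap]
          · by_cases ha2 : a.val = 2
            · -- a = x, b high
              have hv : 3 ≤ b.val := by omega
              have : a = x := Fin.ext (by omega)
              subst this
              refine ⟨_, hp3 b hv, ?_⟩
              simp [Sym2.eq_swap]
            · -- a high, b higher: impossible
              exfalso
              omega
      rcases Nat.lt_trichotomy a.val b.val with h | h | h
      · exact key a b he h
      · exact absurd (Fin.ext h) he.1
      · obtain ⟨p, hp, hep⟩ := key b a he.symm h
        exact ⟨p, hp, by rwa [Sym2.eq_swap]⟩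

end paths

open scoped Classical in
lemma trackSeq_nil {V : Type} (T : Set V) : trackSeq T ([] : List V) = [] := rfl

lemma fan_track_lower {n : ℕ} {s t x : Fin n} (hs : s.val = 0) (ht : t.val = 1)
    (hx : x.val = 2) (T : Set (Fin n))
    (hT : ∀ p q : (fanG n).Walk s t, p.IsPath → q.IsPath →
      trackSeq T p.support = trackSeq T q.support → p = q) :
    ({s, t} : Set (Fin n))ᶜ ⊆ T := by
  classical
  have ast : (fanG n).Adj s t := fanG_adj_of (by omega) (by omega)
  have asx : (fanG n).Adj s x := fanG_adj_of (by omega) (by omega)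
  have axt : (fanG n).Adj x t := fanG_adj_of (by omega) (by omega)
  have hsv : ∀ v : Fin n, 3 ≤ v.val → (fanG n).Adj s v :=
    fun v hv => fanG_adj_of (by omega) (by omega)
  have hvx : ∀ v : Fin n, 3 ≤ v.val → (fanG n).Adj v x :=
    fun v hv => fanG_adj_of (by omega) (by omega)
  have hp1 : (Walk.cons ast Walk.nil).IsPath := by
    rw [Walk.isPath_def]; simp [Fin.ext_iff]; omega
  have hp2 : (Walk.cons asx (Walk.cons axt Walk.nil)).IsPath := by
    rw [Walk.isPath_def]; simp [Fin.ext_iff]; omega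
  have hp3 : ∀ (v : Fin n) (hv : 3 ≤ v.val),
      (Walk.cons (hsv v hv) (Walk.cons (hvx v hv) (Walk.cons axt Walk.nil))).IsPath := by
    intro v hv
    rw [Walk.isPath_def]; simp [Fin.ext_iff]; omega
  have hxT : x ∈ T := by
    by_contra hxT
    have heq : trackSeq T (Walk.cons ast Walk.nil).support =
        trackSeq T (Walk.cons asx (Walk.cons axt Walk.nil)).support := by
      simp only [Walk.support_cons, Walk.support_nil]
      simp [trackSeq_cons, trackSeq_nil, hxT]
    have := hT _ _ hp1 hp2 heq
    have hlen := congrArg Walk.length this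
    simp at hlen
  have hvT : ∀ v : Fin n, 3 ≤ v.val → v ∈ T := by
    intro v hv
    by_contra hvT
    have heq : trackSeq T (Walk.cons asx (Walk.cons axt Walk.nil)).support =
        trackSeq T (Walk.cons (hsv v hv) (Walk.cons (hvx v hv)
          (Walk.cons axt Walk.nil))).support := by
      simp only [Walk.support_cons, Walk.support_nil]
      simp [trackSeq_cons, trackSeq_nil, hvT]
    have := hT _ _ hp2 (hp3 v hv) heq
    have hlen := congrArg Walk.length this
    simp at hlen
  intro v hv
  simp only [Set.mem_compl_iff, Set.mem_insert_iff, Set.mem_singleton_iff] at hv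
  push_neg at hv
  have hv0 : v.val ≠ 0 := fun h => hv.1 (Fin.ext (by omega))
  have hv1 : v.val ≠ 1 := fun h => hv.2 (Fin.ext (by omega))
  by_cases h2 : v.val = 2
  · rwa [show v = x from Fin.ext (by omega)]
  · exact hvT v (by omega)

lemma compl_pair_ncard {n : ℕ} {s t : Fin n} (hst : s ≠ t) :
    (({s, t} : Set (Fin n))ᶜ).ncard = n - 2 := by
  have h := Set.ncard_add_ncard_compl ({s, t} : Set (Fin n))
  rw [Set.ncard_pair hst] at h
  have hcard : Nat.card (Fin n) = n := by simp
  omega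


theorem stmt19 : ∀ n : ℕ, 4 ≤ n →
    ∃ (G : SimpleGraph (Fin n)) (s t : Fin n),
      IsChordal G ∧ s ≠ t ∧ Reduced G s t ∧
      (∃ F : Set (Fin n), IsFVS G F ∧ F.ncard = 1) ∧
      (∀ F : Set (Fin n), IsFVS G F → 1 ≤ F.ncard) ∧
      (∃ T : Set (Fin n), IsTrackingSet G s t T ∧ T.ncard = n - 2) ∧
      (∀ T : Set (Fin n), IsTrackingSet G s t T → n - 2 ≤ T.ncard) := by
  intro n hn
  set s : Fin n := ⟨0, by omega⟩ with hsdef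
  set t : Fin n := ⟨1, by omega⟩ with htdef
  set x : Fin n := ⟨2, by omega⟩ with hxdef
  have hs : s.val = 0 := rfl
  have ht : t.val = 1 := rfl
  have hx : x.val = 2 := rfl
  have hst : s ≠ t := fun h => by
    rw [Fin.ext_iff, hs, ht] at h
    exact absurd h (by omega)
  refine ⟨fanG n, s, t, fan_chordal hn, hst, fan_reduced hs ht hx, ?_, ?_, ?_, ?_⟩
  · -- FVS of size 1
    exact ⟨{s}, fan_fvs hn, Set.ncard_singleton s⟩
  · -- every FVS is nonempty
    intro F hF
    have ast : (fanG n).Adj s t := fanG_adj_of (by omega) (by omega)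
    have atx : (fanG n).Adj t x := fanG_adj_of (by omega) (by omega)
    have axs : (fanG n).Adj x s := fanG_adj_of (by omega) (by omega)
    have hcyc : (Walk.cons ast (Walk.cons atx (Walk.cons axs Walk.nil))).IsCycle := by
      rw [Walk.isCycle_def]
      refine ⟨?_, by simp, ?_⟩
      · rw [Walk.isTrail_def]
        simp [Sym2.eq_iff, Fin.ext_iff, ht, hx]
      · simp [Fin.ext_iff, ht, hx]
    obtain ⟨y, -, hyF⟩ := hF s _ hcyc
    exact (Set.ncard_pos).mpr ⟨y, hyF⟩
  · -- tracking set of size n - 2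
    refine ⟨({s, t} : Set (Fin n))ᶜ, ?_, compl_pair_ncard hst⟩
    have hEq : (({s, t} : Set (Fin n))ᶜ) = {v : Fin n | v ≠ s ∧ v ≠ t} := by
      ext v
      simp [Set.mem_compl_iff]
    intro p q hp hq h
    rw [hEq] at h
    exact tracking_compl hst p q hp hq h
  · -- every tracking set has size at least n - 2
    intro T hT
    have hsub : ({s, t} : Set (Fin n))ᶜ ⊆ T :=
      fan_track_lower hs ht hx T (fun p q hp hq h => hT p q hp hq h)
    calc n - 2 = (({s, t} : Set (Fin n))ᶜ).ncard := (compl_pair_ncard hst).symm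
      _ ≤ T.ncard := Set.ncard_le_ncard hsub (Set.toFinite T)
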